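/- arXiv:1109.4660 — 2 statements merged into one kernel-verified Lean document; each statement's English description precedes it below -/
import Mathlib

section
/- (Carlitz connection formula) For every natural number k and every real number u, u^k = Σ_{i=0}^{k} δ_i^{(k)} q_i(u), where δ_i^{(k)} = ((k+1)!/2^k) · (−1)^{k−i} (2i)! / ((k−i)! · i! · (2i+1−k)!) if (k−1)/2 ≤ i ≤ k, and δ_i^{(k)} = 0 if 0 ≤ i < (k−1)/2. -/
open Finset

/-- The Bessel polynomial `q_n`, normalized so that `q_n(0) = 1`. -/
noncomputable def besselQ (n : ℕ) (u : ℝ) : ℝ :=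
  ∑ k ∈ Finset.range (n + 1),
    ((n.factorial : ℝ) * (2 * n - k).factorial * 2 ^ k) /
      ((2 * n).factorial * (n - k).factorial * k.factorial) * u ^ k

lemma fsucc (n : ℕ) : ((n+1).factorial : ℝ) = (n+1) * n.factorial := by
  push_cast [Nat.factorial_succ]; ring

noncomputable def bc (n j : ℕ) : ℝ :=
  ((n.factorial : ℝ) * (2 * n - j).factorial * 2 ^ j) /
      ((2 * n).factorial * (n - j).factorial * j.factorial)

lemma key1 (j t : ℕ) :
    bc (j+1+t) j
      = ((2*(j+1+t)+3)*(2*(j+1+t)+1) : ℝ) * (bc (j+1+t+2) (j+2) - bc (j+1+t+1) (j+2)) := by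
  unfold bc
  have e1 : 2*(j+1+t) - j = 2*t+2+j := by omega
  have e2 : (j+1+t) - j = t+1 := by omega
  have e3 : 2*(j+1+t+2) - (j+2) = 2*t+4+j := by omega
  have e4 : (j+1+t+2) - (j+2) = t+1 := by omega
  have e5 : 2*(j+1+t+1) - (j+2) = 2*t+2+j := by omega
  have e6 : (j+1+t+1) - (j+2) = t := by omega
  rw [e1, e2, e3, e4, e5, e6]
  have f1 : ((2*t+4+j).factorial : ℝ) = (2*t+4+j)*(2*t+3+j)*(2*t+2+j).factorial := by
    rw [show 2*t+4+j = (2*t+3+j)+1 by ring, fsucc, show 2*t+3+j = (2*t+2+j)+1 by ring, fsucc]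
    push_cast; ring
  have f2 : ((j+1+t+2).factorial : ℝ) = (j+t+3)*(j+t+2)*(j+1+t).factorial := by
    rw [show j+1+t+2 = ((j+1+t)+1)+1 by ring, fsucc, fsucc]
    push_cast; ring
  have f3 : ((j+1+t+1).factorial : ℝ) = (j+t+2)*(j+1+t).factorial := by
    rw [show j+1+t+1 = (j+1+t)+1 by ring, fsucc]; push_cast; ring
  have f4 : ((2*(j+1+t+2)).factorial : ℝ)
      = (2*j+2*t+6)*(2*j+2*t+5)*(2*j+2*t+4)*(2*j+2*t+3)*(2*(j+1+t)).factorial := by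
    rw [show 2*(j+1+t+2) = (2*j+2*t+5)+1 by ring, fsucc, show 2*j+2*t+5 = (2*j+2*t+4)+1 by ring,
      fsucc, show 2*j+2*t+4 = (2*j+2*t+3)+1 by ring, fsucc,
      show 2*j+2*t+3 = (2*(j+1+t))+1 by ring, fsucc]
    push_cast; ring
  have f5 : ((2*(j+1+t+1)).factorial : ℝ)
      = (2*j+2*t+4)*(2*j+2*t+3)*(2*(j+1+t)).factorial := by
    rw [show 2*(j+1+t+1) = (2*j+2*t+3)+1 by ring, fsucc,
      show 2*j+2*t+3 = (2*(j+1+t))+1 by ring, fsucc]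
    push_cast; ring
  have f6 : ((j+2).factorial : ℝ) = (j+2)*(j+1)*j.factorial := by
    rw [show j+2 = (j+1)+1 by ring, fsucc, fsucc]; push_cast; ring
  have f7 : ((t+1).factorial : ℝ) = (t+1)*t.factorial := fsucc t
  rw [f1, f2, f3, f4, f5, f6, f7]
  have p1 : ((2*(j+1+t)).factorial : ℝ) ≠ 0 := by positivity
  have p2 : ((2*t+2+j).factorial : ℝ) ≠ 0 := by positivity
  have p3 : ((j+1+t).factorial : ℝ) ≠ 0 := by positivity
  have p4 : (t.factorial : ℝ) ≠ 0 := by positivity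
  have p5 : (j.factorial : ℝ) ≠ 0 := by positivity
  field_simp
  ring

lemma key1top (i : ℕ) :
    bc i i = ((2*i+3)*(2*i+1) : ℝ) * bc (i+2) (i+2) := by
  unfold bc
  have e1 : 2*i - i = i := by omega
  have e2 : i - i = 0 := by omega
  have e3 : 2*(i+2) - (i+2) = i+2 := by omega
  have e4 : (i+2) - (i+2) = 0 := by omega
  rw [e1, e2, e3, e4]
  have f2 : ((i+2).factorial : ℝ) = (i+2)*(i+1)*i.factorial := by
    rw [show i+2 = (i+1)+1 by ring, fsucc, fsucc]; push_cast; ring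
  have f4 : ((2*(i+2)).factorial : ℝ)
      = (2*i+4)*(2*i+3)*(2*i+2)*(2*i+1)*(2*i).factorial := by
    rw [show 2*(i+2) = (2*i+3)+1 by ring, fsucc, show 2*i+3 = (2*i+2)+1 by ring, fsucc,
      show 2*i+2 = (2*i+1)+1 by ring, fsucc, show 2*i+1 = (2*i)+1 by ring, fsucc]
    push_cast; ring
  rw [f2, f4]
  have p1 : ((2*i).factorial : ℝ) ≠ 0 := by positivity
  have p3 : (i.factorial : ℝ) ≠ 0 := by positivity
  field_simp
  ring

lemma bc_zero (n : ℕ) : bc n 0 = 1 := by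
  unfold bc
  simp [Nat.sub_zero]
  have h1 : ((2*n).factorial : ℝ) ≠ 0 := by positivity
  have h2 : ((n).factorial : ℝ) ≠ 0 := by positivity
  field_simp

lemma bc_one (n : ℕ) (hn : 1 ≤ n) : bc n 1 = 1 := by
  unfold bc
  obtain ⟨m, rfl⟩ : ∃ m, n = m + 1 := ⟨n-1, by omega⟩
  have e1 : 2*(m+1) - 1 = 2*m+1 := by omega
  have e2 : (m+1) - 1 = m := by omega
  rw [e1, e2]
  have f1 : ((2*(m+1)).factorial : ℝ) = (2*m+2)*(2*m+1).factorial := by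
    rw [show 2*(m+1) = (2*m+1)+1 by ring, fsucc]; push_cast; ring
  rw [f1, fsucc]
  have p1 : ((2*m+1).factorial : ℝ) ≠ 0 := by positivity
  have p2 : (m.factorial : ℝ) ≠ 0 := by positivity
  field_simp
  ring

lemma besselQ_eq (n : ℕ) (u : ℝ) :
    besselQ n u = ∑ j ∈ Finset.range (n+1), bc n j * u^j := rfl

lemma besselQ_rec (i : ℕ) (u : ℝ) :
    u^2 * besselQ i u = ((2*i+3)*(2*i+1) : ℝ) * (besselQ (i+2) u - besselQ (i+1) u) := by
  rw [besselQ_eq, besselQ_eq, besselQ_eq]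
  have h2 : ∑ j ∈ Finset.range (i+2+1), bc (i+2) j * u^j
      = 1 + u + ∑ j ∈ Finset.range (i+1), bc (i+2) (j+2) * u^(j+2) := by
    rw [Finset.sum_range_succ', Finset.sum_range_succ']
    have e : ∀ x ∈ Finset.range (i+1),
        bc (i+2) (x+1+1) * u^(x+1+1) = bc (i+2) (x+2) * u^(x+2) := fun x _ => rfl
    rw [Finset.sum_congr rfl e]
    have b0 : bc (i+2) 0 = 1 := bc_zero _
    have b1 : bc (i+2) (0+1) = 1 := bc_one _ (by omega)
    rw [b0, b1]
    ring
  have h3 : ∑ j ∈ Finset.range (i+1+1), bc (i+1) j * u^j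
      = 1 + u + ∑ j ∈ Finset.range i, bc (i+1) (j+2) * u^(j+2) := by
    rw [Finset.sum_range_succ', Finset.sum_range_succ']
    have e : ∀ x ∈ Finset.range i,
        bc (i+1) (x+1+1) * u^(x+1+1) = bc (i+1) (x+2) * u^(x+2) := fun x _ => rfl
    rw [Finset.sum_congr rfl e]
    have b0 : bc (i+1) 0 = 1 := bc_zero _
    have b1 : bc (i+1) (0+1) = 1 := bc_one _ (by omega)
    rw [b0, b1]
    ring
  rw [h2, h3]
  have hL : u^2 * ∑ j ∈ Finset.range (i+1), bc i j * u^j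
      = ∑ j ∈ Finset.range i, bc i j * u^(j+2) + bc i i * u^(i+2) := by
    rw [Finset.mul_sum, Finset.sum_range_succ]
    congr 1
    · exact Finset.sum_congr rfl (fun j _ => by ring)
    · ring
  rw [hL]
  have hsplit : ∑ j ∈ Finset.range (i+1), bc (i+2) (j+2) * u^(j+2)
      = ∑ j ∈ Finset.range i, bc (i+2) (j+2) * u^(j+2) + bc (i+2) (i+2) * u^(i+2) :=
    Finset.sum_range_succ _ _
  rw [hsplit]
  rw [show (1 + u + (∑ j ∈ Finset.range i, bc (i+2) (j+2) * u^(j+2) + bc (i+2) (i+2) * u^(i+2))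
      - (1 + u + ∑ j ∈ Finset.range i, bc (i+1) (j+2) * u^(j+2)))
      = ((∑ j ∈ Finset.range i, bc (i+2) (j+2) * u^(j+2)
          - ∑ j ∈ Finset.range i, bc (i+1) (j+2) * u^(j+2)) + bc (i+2) (i+2) * u^(i+2)) by ring]
  rw [← Finset.sum_sub_distrib, mul_add, Finset.mul_sum]
  congr 1
  · apply Finset.sum_congr rfl
    intro j hj
    rw [Finset.mem_range] at hj
    obtain ⟨t, rfl⟩ : ∃ t, i = j+1+t := ⟨i-1-j, by omega⟩
    rw [key1 j t]
    push_cast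
    ring
  · rw [key1top i]
    ring


/-- The Pochhammer symbol `(x)_j = x (x+1) ⋯ (x+j-1)`. -/
noncomputable def poch (x : ℝ) (j : ℕ) : ℝ := ∏ i ∈ Finset.range j, (x + i)

/-- Generalized binomial coefficient with integer (possibly negative) upper entry. -/
noncomputable def gbinom (z : ℤ) (j : ℕ) : ℝ :=
  (∏ i ∈ Finset.range j, ((z : ℝ) - i)) / j.factorial

/-- The Carlitz connection coefficients `δ_i^{(k)}`. -/
noncomputable def carlitzDelta (i k : ℕ) : ℝ :=
  if i ≤ k ∧ k ≤ 2 * i + 1 then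
    ((k + 1).factorial / 2 ^ k : ℝ) *
      ((-1 : ℝ) ^ (k - i) * (2 * i).factorial /
        ((k - i).factorial * i.factorial * (2 * i + 1 - k).factorial))
  else 0

lemma delta_rec0 (k : ℕ) : carlitzDelta 0 (k+2) = 0 := by
  unfold carlitzDelta
  rw [if_neg (by omega)]

lemma delta_rec1 (k : ℕ) : carlitzDelta 1 (k+2) = -3 * carlitzDelta 0 k := by
  unfold carlitzDelta
  match k with
  | 0 => norm_num [Nat.factorial]
  | 1 => norm_num [Nat.factorial]
  | (n+2) => rw [if_neg (by omega), if_neg (by omega)]; ring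

lemma delta_rec2 (m k : ℕ) :
    carlitzDelta (m+2) (k+2)
      = ((2*m+3)*(2*m+1) : ℝ) * carlitzDelta m k
        - ((2*m+5)*(2*m+3) : ℝ) * carlitzDelta (m+1) k := by
  unfold carlitzDelta
  split_ifs with h1 h2 h3 h3' h2' h3'' h3'''
  -- h1 : m+2 ≤ k+2 ∧ k+2 ≤ 2(m+2)+1 ; h2 : m ≤ k ∧ k ≤ 2m+1 ; h3 : m+1 ≤ k ∧ k ≤ 2(m+1)+1
  · -- branch A : all true
    obtain ⟨b, rfl⟩ : ∃ b, k = m+1+b := ⟨k-m-1, by omega⟩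
    obtain ⟨s, rfl⟩ : ∃ s, m = b+s := ⟨m-b, by omega⟩
    have e1 : b+s+1+b+2 - (b+s+2) = b+1 := by omega
    have e2 : 2*(b+s+2)+1 - (b+s+1+b+2) = s+2 := by omega
    have e3 : b+s+1+b - (b+s) = b+1 := by omega
    have e4 : 2*(b+s)+1 - (b+s+1+b) = s := by omega
    have e5 : b+s+1+b - (b+s+1) = b := by omega
    have e6 : 2*(b+s+1)+1 - (b+s+1+b) = s+2 := by omega
    rw [e1, e2, e3, e4, e5, e6]
    have g1 : ((b+s+1+b+2+1).factorial : ℝ)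
        = (2*b+s+4)*(2*b+s+3)*(b+s+1+b+1).factorial := by
      rw [show b+s+1+b+2+1 = ((b+s+1+b+1)+1)+1 by ring, fsucc, fsucc]; push_cast; ring
    have g2 : ((2:ℝ)^(b+s+1+b+2)) = 4 * 2^(b+s+1+b) := by
      rw [show b+s+1+b+2 = (b+s+1+b)+2 by ring, pow_add]; ring
    have g3 : ((2*(b+s+2)).factorial : ℝ)
        = (2*b+2*s+4)*(2*b+2*s+3)*(2*b+2*s+2)*(2*b+2*s+1)*(2*(b+s)).factorial := by
      rw [show 2*(b+s+2) = (2*b+2*s+3)+1 by ring, fsucc,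
        show 2*b+2*s+3 = (2*b+2*s+2)+1 by ring, fsucc,
        show 2*b+2*s+2 = (2*b+2*s+1)+1 by ring, fsucc,
        show 2*b+2*s+1 = (2*(b+s))+1 by ring, fsucc]
      push_cast; ring
    have g4 : ((b+1).factorial : ℝ) = (b+1)*b.factorial := fsucc b
    have g5 : ((b+s+2).factorial : ℝ) = (b+s+2)*(b+s+1)*(b+s).factorial := by
      rw [show b+s+2 = ((b+s)+1)+1 by ring, fsucc, fsucc]; push_cast; ring
    have g6 : ((s+2).factorial : ℝ) = (s+2)*(s+1)*s.factorial := by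
      rw [show s+2 = (s+1)+1 by ring, fsucc, fsucc]; push_cast; ring
    have g7 : ((b+s+1+b+1).factorial : ℝ) = (2*b+s+2)*(b+s+1+b).factorial := by
      rw [show b+s+1+b+1 = (b+s+1+b)+1 by ring, fsucc]; push_cast; ring
    have g8 : ((2*(b+s+1)).factorial : ℝ)
        = (2*b+2*s+2)*(2*b+2*s+1)*(2*(b+s)).factorial := by
      rw [show 2*(b+s+1) = (2*b+2*s+1)+1 by ring, fsucc,
        show 2*b+2*s+1 = (2*(b+s))+1 by ring, fsucc]
      push_cast; ring
    have g9 : ((b+s+1).factorial : ℝ) = (b+s+1)*(b+s).factorial := by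
      rw [show b+s+1 = (b+s)+1 by ring, fsucc]; push_cast; ring
    have gs : ((-1:ℝ))^(b+1) = (-1)^b * (-1) := pow_succ _ _
    rw [g1, g2, g3, g4, g5, g6, g7, g8, g9, gs]
    have p1 : ((b+s+1+b).factorial : ℝ) ≠ 0 := by positivity
    have p2 : ((2*(b+s)).factorial : ℝ) ≠ 0 := by positivity
    have p3 : ((b+s).factorial : ℝ) ≠ 0 := by positivity
    have p4 : (b.factorial : ℝ) ≠ 0 := by positivity
    have p5 : (s.factorial : ℝ) ≠ 0 := by positivity
    have p6 : ((2:ℝ)^(b+s+1+b)) ≠ 0 := by positivity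
    field_simp
    push_cast
    ring
  · -- h2 true, h3 false : k = m
    have hk : m = k := by omega
    subst hk
    have e1 : m+2 - (m+2) = 0 := by omega
    have e2 : 2*(m+2)+1 - (m+2) = m+3 := by omega
    have e3 : m - m = 0 := by omega
    have e4 : 2*m+1 - m = m+1 := by omega
    rw [e1, e2, e3, e4]
    have g1 : ((m+2+1).factorial : ℝ) = (m+3)*(m+2)*(m+1)*m.factorial := by
      rw [show m+2+1 = ((m+1)+1)+1 by ring, fsucc, fsucc, fsucc]; push_cast; ring
    have g2 : ((2:ℝ)^(m+2)) = 4 * 2^m := by rw [pow_add]; ring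
    have g3 : ((2*(m+2)).factorial : ℝ)
        = (2*m+4)*(2*m+3)*(2*m+2)*(2*m+1)*(2*m).factorial := by
      rw [show 2*(m+2) = (2*m+3)+1 by ring, fsucc, show 2*m+3 = (2*m+2)+1 by ring, fsucc,
        show 2*m+2 = (2*m+1)+1 by ring, fsucc, show 2*m+1 = (2*m)+1 by ring, fsucc]
      push_cast; ring
    have g4 : ((m+2).factorial : ℝ) = (m+2)*(m+1)*m.factorial := by
      rw [show m+2 = (m+1)+1 by ring, fsucc, fsucc]; push_cast; ring
    have g5 : ((m+3).factorial : ℝ) = (m+3)*(m+2)*(m+1)*m.factorial := by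
      rw [show m+3 = ((m+1)+1)+1 by ring, fsucc, fsucc, fsucc]; push_cast; ring
    have g6 : ((m+1).factorial : ℝ) = (m+1)*m.factorial := fsucc m
    rw [g1, g2, g3, g4, g6]
    simp only [Nat.factorial_zero, Nat.cast_one, pow_zero]
    have p1 : ((2*m).factorial : ℝ) ≠ 0 := by positivity
    have p2 : (m.factorial : ℝ) ≠ 0 := by positivity
    have p3 : ((2:ℝ)^m) ≠ 0 := by positivity
    field_simp
    ring
  · -- h2 false, h3 true : k = 2m+2 or k = 2m+3
    have hk : k = 2*m+2 ∨ k = 2*m+3 := by omega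
    rcases hk with rfl | rfl
    · have e1 : 2*m+2+2 - (m+2) = m+2 := by omega
      have e2 : 2*(m+2)+1 - (2*m+2+2) = 1 := by omega
      have e3 : 2*m+2 - (m+1) = m+1 := by omega
      have e4 : 2*(m+1)+1 - (2*m+2) = 1 := by omega
      rw [e1, e2, e3, e4]
      have g1 : ((2*m+2+2+1).factorial : ℝ)
          = (2*m+5)*(2*m+4)*(2*m+3)*(2*(m+1)).factorial := by
        rw [show 2*m+2+2+1 = (((2*(m+1))+1)+1)+1 by ring, fsucc, fsucc, fsucc]
        push_cast; ring
      have g2 : ((2:ℝ)^(2*m+2+2)) = 4 * 2^(2*m+2) := by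
        rw [show 2*m+2+2 = (2*m+2)+2 by ring, pow_add]; ring
      have g3 : ((2*(m+2)).factorial : ℝ) = (2*m+4)*(2*m+3)*(2*(m+1)).factorial := by
        rw [show 2*(m+2) = (2*m+3)+1 by ring, fsucc, show 2*m+3 = (2*(m+1))+1 by ring, fsucc]
        push_cast; ring
      have g4 : ((m+2).factorial : ℝ) = (m+2)*(m+1).factorial := by
        rw [show m+2 = (m+1)+1 by ring, fsucc]; push_cast; ring
      have g5 : ((2*m+2+1).factorial : ℝ) = (2*m+3)*(2*(m+1)).factorial := by
        rw [show 2*m+2+1 = (2*(m+1))+1 by ring, fsucc]; push_cast; ring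
      have gs : ((-1:ℝ))^(m+2) = (-1)^(m+1) * (-1) := pow_succ _ _
      rw [g1, g2, g3, g4, g5, gs]
      simp only [Nat.factorial_zero, Nat.factorial_one, Nat.cast_one, pow_zero]
      have p2 : ((2*(m+1)).factorial : ℝ) ≠ 0 := by positivity
      have p3 : ((m+1).factorial : ℝ) ≠ 0 := by positivity
      have p4 : ((2:ℝ)^(2*m+2)) ≠ 0 := by positivity
      field_simp
      ring
    · have e1 : 2*m+3+2 - (m+2) = m+3 := by omega
      have e2 : 2*(m+2)+1 - (2*m+3+2) = 0 := by omega
      have e3 : 2*m+3 - (m+1) = m+2 := by omega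
      have e4 : 2*(m+1)+1 - (2*m+3) = 0 := by omega
      rw [e1, e2, e3, e4]
      have g1 : ((2*m+3+2+1).factorial : ℝ)
          = (2*m+6)*(2*m+5)*(2*m+3+1).factorial := by
        rw [show 2*m+3+2+1 = ((2*m+3+1)+1)+1 by ring, fsucc, fsucc]; push_cast; ring
      have g2 : ((2:ℝ)^(2*m+3+2)) = 4 * 2^(2*m+3) := by
        rw [show 2*m+3+2 = (2*m+3)+2 by ring, pow_add]; ring
      have g3 : ((2*(m+2)).factorial : ℝ) = (2*m+4)*(2*m+3)*(2*(m+1)).factorial := by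
        rw [show 2*(m+2) = (2*m+3)+1 by ring, fsucc, show 2*m+3 = (2*(m+1))+1 by ring, fsucc]
        push_cast; ring
      have g4 : ((m+3).factorial : ℝ) = (m+3)*(m+2)*(m+1).factorial := by
        rw [show m+3 = ((m+1)+1)+1 by ring, fsucc, fsucc]; push_cast; ring
      have g5 : ((m+2).factorial : ℝ) = (m+2)*(m+1).factorial := by
        rw [show m+2 = (m+1)+1 by ring, fsucc]; push_cast; ring
      have g6 : ((2*m+3+1).factorial : ℝ) = (2*m+4)*(2*m+3)*(2*(m+1)).factorial := by
        rw [show 2*m+3+1 = (2*m+3)+1 by ring, fsucc, show 2*m+3 = (2*(m+1))+1 by ring, fsucc]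
        push_cast; ring
      have gs : ((-1:ℝ))^(m+3) = (-1)^(m+2) * (-1) := pow_succ _ _
      rw [g1, g2, g3, g4, g5, g6, gs]
      simp only [Nat.factorial_zero, Nat.factorial_one, Nat.cast_one, pow_zero]
      have p2 : ((2*(m+1)).factorial : ℝ) ≠ 0 := by positivity
      have p3 : ((m+1).factorial : ℝ) ≠ 0 := by positivity
      have p4 : ((2:ℝ)^(2*m+3)) ≠ 0 := by positivity
      field_simp
      ring
  · omega
  · omega
  · omega
  · omega
  · ring

lemma delta_top (k : ℕ) : carlitzDelta (k+1) k = 0 := by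
  unfold carlitzDelta
  rw [if_neg (by omega)]

theorem carlitz_connection_formula (k : ℕ) (u : ℝ) :
    u ^ k = ∑ i ∈ Finset.range (k + 1), carlitzDelta i k * besselQ i u := by
  induction k using Nat.twoStepInduction with
  | zero => norm_num [besselQ, carlitzDelta, Finset.sum_range_succ]
  | one =>
    norm_num [besselQ, carlitzDelta, Finset.sum_range_succ, Nat.factorial]
  | more k ih _ =>
    have hstep : u^(k+2) = u^2 * u^k := by ring
    rw [hstep, ih, Finset.mul_sum]
    have lhs1 : ∀ i ∈ Finset.range (k+1),
        u^2 * (carlitzDelta i k * besselQ i u)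
          = ((2*i+3)*(2*i+1) : ℝ) * carlitzDelta i k * besselQ (i+2) u
            - ((2*i+3)*(2*i+1) : ℝ) * carlitzDelta i k * besselQ (i+1) u := by
      intro i _
      have h := besselQ_rec i u
      calc u^2 * (carlitzDelta i k * besselQ i u)
          = carlitzDelta i k * (u^2 * besselQ i u) := by ring
        _ = carlitzDelta i k * (((2*i+3)*(2*i+1) : ℝ)
              * (besselQ (i+2) u - besselQ (i+1) u)) := by rw [h]
        _ = _ := by ring
    rw [Finset.sum_congr rfl lhs1, Finset.sum_sub_distrib]
    rw [Finset.sum_range_succ' _ (k+2), Finset.sum_range_succ' _ (k+1)]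
    have rhs1 : ∀ i ∈ Finset.range (k+1),
        carlitzDelta (i+1+1) (k+2) * besselQ (i+1+1) u
          = ((2*i+3)*(2*i+1) : ℝ) * carlitzDelta i k * besselQ (i+2) u
            - ((2*i+5)*(2*i+3) : ℝ) * carlitzDelta (i+1) k * besselQ (i+2) u := by
      intro i _
      have h := delta_rec2 i k
      calc carlitzDelta (i+1+1) (k+2) * besselQ (i+1+1) u
          = carlitzDelta (i+2) (k+2) * besselQ (i+2) u := rfl
        _ = _ := by rw [h]; ring
    rw [Finset.sum_congr rfl rhs1, Finset.sum_sub_distrib]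
    have hz : carlitzDelta 0 (k+2) * besselQ 0 u = 0 := by
      rw [delta_rec0]; ring
    have ho : carlitzDelta (0+1) (k+2) * besselQ (0+1) u
        = -3 * carlitzDelta 0 k * besselQ 1 u := by
      have : carlitzDelta (0+1) (k+2) = -3 * carlitzDelta 0 k := delta_rec1 k
      rw [this]
    rw [hz, ho]
    -- remaining: relate the two "lower" sums
    have hlow : ∑ i ∈ Finset.range (k+1),
          ((2*i+3)*(2*i+1) : ℝ) * carlitzDelta i k * besselQ (i+1) u
        = ∑ i ∈ Finset.range k,
            ((2*i+5)*(2*i+3) : ℝ) * carlitzDelta (i+1) k * besselQ (i+2) u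
          + 3 * carlitzDelta 0 k * besselQ 1 u := by
      rw [Finset.sum_range_succ' _ k]
      congr 1
      · apply Finset.sum_congr rfl
        intro i _
        push_cast
        ring_nf
      · push_cast
        ring_nf
    have htop : ∑ i ∈ Finset.range (k+1),
          ((2*i+5)*(2*i+3) : ℝ) * carlitzDelta (i+1) k * besselQ (i+2) u
        = ∑ i ∈ Finset.range k,
            ((2*i+5)*(2*i+3) : ℝ) * carlitzDelta (i+1) k * besselQ (i+2) u := by
      rw [Finset.sum_range_succ, delta_top]
      ring
    rw [hlow, htop]
    ring
end

section
/- For all natural numbers n and m ≥ 1 and every real number a with a ≠ 0, β_{n+m−1}^{(n,m)}(a) = a^{n+1} (1−a)^{m−1} · ((1/2) · (1/2)_{n+m−1}) / ((1/2)_n (1/2)_m) · ( C(n+m+1, 2) − C(n+m+1, 1)·C(n, 1)·a^{−1} + C(n+1, 2)·a^{−2} ), where C denotes the usual binomial coefficient and a^{−1}, a^{−2} are powers of the nonzero real a. -/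
open Finset

noncomputable def Acoef (n k : ℕ) : ℝ :=
  ((n.factorial : ℝ) * (2 * n - k).factorial * 2 ^ k) /
      ((2 * n).factorial * (n - k).factorial * k.factorial)

lemma poch_half (k : ℕ) : poch (1/2) k = (2*k).factorial / (4^k * k.factorial) := by
  induction k with
  | zero => simp [poch]
  | succ k ih =>
    rw [poch, Finset.prod_range_succ, ← poch, ih]
    have h1 : (2*(k+1)) = (2*k+1) + 1 := by ring
    rw [h1, Nat.factorial_succ, Nat.factorial_succ, Nat.factorial_succ]
    have h2 : ((k.factorial : ℝ)) ≠ 0 := Nat.cast_ne_zero.2 k.factorial_ne_zero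
    have h3 : ((2*k).factorial : ℝ) ≠ 0 := Nat.cast_ne_zero.2 (2*k).factorial_ne_zero
    push_cast
    field_simp
    ring

lemma poch_half_pos (k : ℕ) : 0 < poch (1/2) k := by
  apply Finset.prod_pos; intro i _; positivity

lemma Acoef_diag (k : ℕ) : Acoef k k = 1 / (2^k * poch (1/2) k) := by
  rw [Acoef, poch_half]
  have : 2*k - k = k := by omega
  rw [this, Nat.sub_self]
  have h2 : ((k.factorial : ℝ)) ≠ 0 := Nat.cast_ne_zero.2 k.factorial_ne_zero
  have h3 : ((2*k).factorial : ℝ) ≠ 0 := Nat.cast_ne_zero.2 (2*k).factorial_ne_zero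
  have h4 : (4:ℝ)^k = 2^k * 2^k := by rw [← mul_pow]; norm_num
  field_simp [h4]
  ring_nf
  rw [h4]
  ring

lemma Acoef_diag_ne (k : ℕ) : Acoef k k ≠ 0 := by
  rw [Acoef_diag]
  have := poch_half_pos k
  positivity

lemma choose_two_cast (k : ℕ) : (((k+1).choose 2 : ℕ) : ℝ) = k*(k+1)/2 := by
  induction k with
  | zero => simp
  | succ k ih =>
    have : (k+2).choose 2 = (k+1).choose 1 + (k+1).choose 2 := rfl
    rw [this]
    push_cast [ih]
    simp
    ring

lemma Acoef_sub (k : ℕ) (hk : 1 ≤ k) :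
    Acoef k (k-1) = (((k+1).choose 2 : ℕ) : ℝ) * Acoef k k := by
  obtain ⟨k, rfl⟩ : ∃ j, k = j + 1 := ⟨k-1, by omega⟩
  rw [choose_two_cast, Acoef, Acoef]
  have e1 : (k+1) - 1 = k := by omega
  have e2 : 2*(k+1) - k = k+2 := by omega
  have e2b : (k+1) - k = 1 := by omega
  have e3 : 2*(k+1) - (k+1) = k+1 := by omega
  have e4 : (k+1)-(k+1) = 0 := by omega
  rw [e1, e2, e2b, e3, e4]
  have h2 : ∀ j : ℕ, ((j.factorial : ℝ)) ≠ 0 := fun j => Nat.cast_ne_zero.2 j.factorial_ne_zero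
  have h5 : (k+2).factorial = (k+2)*(k+1)*k.factorial := by
    rw [Nat.factorial_succ, Nat.factorial_succ]; ring
  have h6 : (k+1).factorial = (k+1)*k.factorial := Nat.factorial_succ k
  rw [h5, h6]
  push_cast
  field_simp
  ring

lemma coeff_sum_CX (M : ℕ) (c : ℕ → ℝ) (i : ℕ) :
    (∑ k ∈ Finset.range M, Polynomial.C (c k) * Polynomial.X ^ k).coeff i
      = if i < M then c i else 0 := by
  rw [Polynomial.finset_sum_coeff]
  simp only [Polynomial.coeff_C_mul, Polynomial.coeff_X_pow, mul_ite, mul_one, mul_zero]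
  rw [Finset.sum_ite_eq (Finset.range M) i c]
  simp [Finset.mem_range]

lemma besselQ_eval (N : ℕ) (c u : ℝ) :
    (∑ i ∈ Finset.range (N+1), Polynomial.C (Acoef N i * c^i) * Polynomial.X^i).eval u
      = besselQ N (c*u) := by
  rw [Polynomial.eval_finset_sum, besselQ]
  apply Finset.sum_congr rfl
  intro k _
  simp [Acoef, mul_pow]
  ring

theorem bessel_linearization_second_coefficient
    (n m : ℕ) (hm : 1 ≤ m) (a : ℝ) (ha : a ≠ 0)
    (β : ℕ → ℝ)
    (hβ : ∀ u : ℝ, besselQ n (a * u) * besselQ m ((1 - a) * u) =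
      ∑ k ∈ Finset.range (n + m + 1), β k * besselQ k u) :
    β (n + m - 1) = a ^ (n + 1) * (1 - a) ^ (m - 1) *
      ((1/2) * poch (1/2) (n + m - 1)) / (poch (1/2) n * poch (1/2) m) *
      (((n + m + 1).choose 2 : ℝ) -
        ((n + m + 1).choose 1 : ℝ) * (n.choose 1 : ℝ) * a ^ (-1 : ℤ) +
        ((n + 1).choose 2 : ℝ) * a ^ (-2 : ℤ)) := by
  classical
  set pa : Polynomial ℝ :=
    ∑ i ∈ Finset.range (n+1), Polynomial.C (Acoef n i * a^i) * Polynomial.X ^ i with hpa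
  set pb : Polynomial ℝ :=
    ∑ j ∈ Finset.range (m+1), Polynomial.C (Acoef m j * (1-a)^j) * Polynomial.X ^ j with hpb
  set pr : Polynomial ℝ :=
    ∑ k ∈ Finset.range (n+m+1), Polynomial.C (β k) *
      (∑ j ∈ Finset.range (k+1), Polynomial.C (Acoef k j * (1:ℝ)^j) * Polynomial.X ^ j) with hpr
  have key : pa * pb = pr := by
    apply Polynomial.funext
    intro u
    rw [Polynomial.eval_mul, hpa, hpb, hpr, besselQ_eval, besselQ_eval, hβ u,
      Polynomial.eval_finset_sum]
    apply Finset.sum_congr rfl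
    intro k _
    rw [Polynomial.eval_mul, Polynomial.eval_C, besselQ_eval, one_mul]
  -- coefficient formulas
  have hca : ∀ i, pa.coeff i = if i < n+1 then Acoef n i * a^i else 0 := fun i =>
    coeff_sum_CX (n+1) _ i
  have hcb : ∀ j, pb.coeff j = if j < m+1 then Acoef m j * (1-a)^j else 0 := fun j =>
    coeff_sum_CX (m+1) _ j
  have hcr : ∀ K, pr.coeff K =
      ∑ k ∈ Finset.range (n+m+1), β k * (if K < k+1 then Acoef k K * (1:ℝ)^K else 0) := by
    intro K
    rw [hpr, Polynomial.finset_sum_coeff]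
    apply Finset.sum_congr rfl
    intro k _
    rw [Polynomial.coeff_C_mul, coeff_sum_CX]
  -- coefficient of pa*pb as range sum
  have hmul : ∀ K, (pa * pb).coeff K =
      ∑ i ∈ Finset.range (K+1), pa.coeff i * pb.coeff (K - i) := by
    intro K
    rw [Polynomial.coeff_mul, Finset.Nat.sum_antidiagonal_eq_sum_range_succ_mk]
  -- equation at degree n+m
  have h1 : Acoef n n * a^n * (Acoef m m * (1-a)^m) = β (n+m) * Acoef (n+m) (n+m) := by
    have L : (pa * pb).coeff (n+m) = Acoef n n * a^n * (Acoef m m * (1-a)^m) := by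
      rw [hmul]
      rw [Finset.sum_eq_single_of_mem n (by rw [Finset.mem_range]; omega)]
      · rw [hca, hcb]
        have : n + m - n = m := by omega
        rw [this, if_pos (by omega), if_pos (by omega)]
      · intro i hi hne
        rw [Finset.mem_range] at hi
        rw [hca, hcb]
        rcases (by omega : ¬ (i < n+1) ∨ ¬ (n+m-i < m+1)) with h | h
        · rw [if_neg h, zero_mul]
        · rw [if_neg h, mul_zero]
    have R : pr.coeff (n+m) = β (n+m) * Acoef (n+m) (n+m) := by
      rw [hcr]
      rw [Finset.sum_eq_single_of_mem (n+m) (by simp [Finset.mem_range])]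
      · rw [if_pos (by omega)]; ring
      · intro k hk hne
        rw [Finset.mem_range] at hk
        rw [if_neg (by omega), mul_zero]
    rw [← L, key, R]
  -- equation at degree n+m-1
  have h2 : (((n+1).choose 2 : ℕ) : ℝ) * Acoef n n * a^(n-1) * (Acoef m m * (1-a)^m)
        + Acoef n n * a^n * ((((m+1).choose 2 : ℕ) : ℝ) * Acoef m m * (1-a)^(m-1))
      = β (n+m-1) * Acoef (n+m-1) (n+m-1)
        + β (n+m) * ((((n+m+1).choose 2 : ℕ) : ℝ) * Acoef (n+m) (n+m)) := by
    have L : (pa * pb).coeff (n+m-1) =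
        (((n+1).choose 2 : ℕ) : ℝ) * Acoef n n * a^(n-1) * (Acoef m m * (1-a)^m)
          + Acoef n n * a^n * ((((m+1).choose 2 : ℕ) : ℝ) * Acoef m m * (1-a)^(m-1)) := by
      rw [hmul]
      rw [← Finset.sum_subset (show ({n-1, n} : Finset ℕ) ⊆ Finset.range (n+m-1+1) by
        intro i hi
        simp only [Finset.mem_insert, Finset.mem_singleton] at hi
        rw [Finset.mem_range]
        omega)]
      swap
      · intro i hi hni
        rw [Finset.mem_range] at hi
        simp only [Finset.mem_insert, Finset.mem_singleton, not_or] at hni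
        rw [hca, hcb]
        rcases (by omega : ¬ (i < n+1) ∨ ¬ (n+m-1-i < m+1)) with h | h
        · rw [if_neg h, zero_mul]
        · rw [if_neg h, mul_zero]
      rcases Nat.eq_zero_or_pos n with hn | hn
      · subst hn
        have : ({0-1, 0} : Finset ℕ) = {0} := by decide
        rw [this, Finset.sum_singleton, hca, hcb]
        have e : 0 + m - 1 - 0 = m - 1 := by omega
        rw [e, if_pos (by omega), if_pos (by omega),
          Acoef_sub m hm]
        simp [Acoef]
      · rw [Finset.sum_pair (by omega : n - 1 ≠ n)]
        rw [hca, hcb, hca, hcb]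
        have e1 : n + m - 1 - (n-1) = m := by omega
        have e2 : n + m - 1 - n = m - 1 := by omega
        rw [e1, e2, if_pos (by omega), if_pos (by omega), if_pos (by omega),
          if_pos (by omega), Acoef_sub n hn, Acoef_sub m hm]
    have R : pr.coeff (n+m-1) = β (n+m-1) * Acoef (n+m-1) (n+m-1)
        + β (n+m) * ((((n+m+1).choose 2 : ℕ) : ℝ) * Acoef (n+m) (n+m)) := by
      rw [hcr]
      rw [← Finset.sum_subset (show ({n+m-1, n+m} : Finset ℕ) ⊆ Finset.range (n+m+1) by
        intro k hk
        simp only [Finset.mem_insert, Finset.mem_singleton] at hk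
        rw [Finset.mem_range]
        omega)]
      swap
      · intro k hk hnk
        rw [Finset.mem_range] at hk
        simp only [Finset.mem_insert, Finset.mem_singleton, not_or] at hnk
        rw [if_neg (by omega), mul_zero]
      rw [Finset.sum_pair (by omega : n+m-1 ≠ n+m)]
      rw [if_pos (by omega), if_pos (by omega)]
      rw [Acoef_sub (n+m) (by omega)]
      ring
    rw [← L, key, R]
  -- solve for β (n+m-1)
  have hAnm1 : Acoef (n+m-1) (n+m-1) ≠ 0 := Acoef_diag_ne _
  have hβnm1 : β (n+m-1) =
      ((((n+1).choose 2 : ℕ) : ℝ) * Acoef n n * a^(n-1) * (Acoef m m * (1-a)^m)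
        + Acoef n n * a^n * ((((m+1).choose 2 : ℕ) : ℝ) * Acoef m m * (1-a)^(m-1))
        - (((n+m+1).choose 2 : ℕ) : ℝ) * (Acoef n n * a^n * (Acoef m m * (1-a)^m)))
        / Acoef (n+m-1) (n+m-1) := by
    rw [h1]
    field_simp
    linarith [h2]
  rw [hβnm1, Acoef_diag n, Acoef_diag m, Acoef_diag (n+m-1)]
  -- now pure algebra
  have hz1 : a ^ (-1 : ℤ) = a⁻¹ := zpow_neg_one a
  have hz2 : a ^ (-2 : ℤ) = (a^2)⁻¹ := by
    rw [show (-2 : ℤ) = -(2:ℕ) by norm_num, zpow_neg, zpow_natCast]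
  rw [hz1, hz2]
  have hPn := poch_half_pos n
  have hPm := poch_half_pos m
  have hPnm := poch_half_pos (n+m-1)
  have hc1 : ((n+m+1).choose 1 : ℝ) = (n+m+1 : ℕ) := by
    rw [Nat.choose_one_right]
  have hc2 : (n.choose 1 : ℝ) = (n : ℕ) := by rw [Nat.choose_one_right]
  rw [hc1, hc2, choose_two_cast, choose_two_cast]
  rw [show (n+m+1).choose 2 = ((n+m)+1).choose 2 by ring_nf, choose_two_cast]
  rcases Nat.eq_zero_or_pos n with hn | hn
  · subst hn
    obtain ⟨m', rfl⟩ : ∃ j, m = j + 1 := ⟨m-1, by omega⟩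
    simp only [Nat.zero_add, Nat.add_sub_cancel, Nat.sub_self, pow_zero, Nat.cast_zero]
    push_cast
    field_simp
    ring
  · obtain ⟨n', rfl⟩ : ∃ j, n = j + 1 := ⟨n-1, by omega⟩
    obtain ⟨m', rfl⟩ : ∃ j, m = j + 1 := ⟨m-1, by omega⟩
    have e1 : n' + 1 - 1 = n' := by omega
    have e2 : m' + 1 - 1 = m' := by omega
    have e3 : n' + 1 + (m' + 1) - 1 = n' + m' + 1 := by omega
    rw [e1, e2, e3]
    push_cast
    field_simp
    ring
end
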